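/- arXiv:2203.06266 — 7 statements merged into one kernel-verified Lean document; each statement's English description precedes it below -/
import Mathlib

section
/- If α is Diophantine of type κ, i.e. there exists c>0 such that |α − p/q| ≥ c/q^κ for all integers p and positive integers q, then for any real P > 2/√3, the shortest nonzero vector length a of the lattice Δ = {(P(x+αy), y/P) : x,y ∈ ℤ} satisfies a^{-1} ≤ c^{-1/κ} · P^{1−2/κ}. -/
open Real

lemma key_lb (α κ c P : ℝ) (hκ : 2 ≤ κ) (hc : 0 < c) (hc1 : c ≤ 1)
    (hdio : ∀ (p : ℤ) (q : ℕ), 0 < q → c / (q : ℝ) ^ κ ≤ |α - (p : ℝ) / (q : ℝ)|)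
    (hP1 : 1 < P) (x y : ℤ) (h : ¬(x = 0 ∧ y = 0)) :
    c ^ (1 / κ) * P ^ (2 / κ - 1)
      ≤ Real.sqrt ((P * ((x : ℝ) + α * y)) ^ 2 + ((y : ℝ) / P) ^ 2) := by
  have hP0 : (0:ℝ) < P := lt_trans one_pos hP1
  have hκ0 : (0:ℝ) < κ := by linarith
  have hm1 : c ^ (1 / κ) * P ^ (2 / κ - 1) ≤ 1 := by
    have h1 : c ^ (1 / κ) ≤ 1 :=
      Real.rpow_le_one hc.le hc1 (by positivity)
    have h2 : P ^ (2 / κ - 1) ≤ 1 := by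
      apply Real.rpow_le_one_of_one_le_of_nonpos hP1.le
      have : 2 / κ ≤ 1 := by
        rw [div_le_one hκ0]; linarith
      linarith
    calc c ^ (1 / κ) * P ^ (2 / κ - 1) ≤ 1 * 1 :=
          mul_le_mul h1 h2 (by positivity) zero_le_one
      _ = 1 := by ring
  by_cases hy : y = 0
  · have hx : x ≠ 0 := by
      intro hx0; exact h ⟨hx0, hy⟩
    subst hy
    have hx1 : (1:ℝ) ≤ |(x:ℝ)| := by
      have := Int.one_le_abs hx
      rw [← Int.cast_abs]
      exact_mod_cast this
    have : Real.sqrt ((P * ((x : ℝ) + α * 0)) ^ 2 + ((0 : ℝ) / P) ^ 2)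
        = P * |(x:ℝ)| := by
      rw [mul_zero, add_zero, zero_div]
      rw [show ((0:ℝ))^2 = 0 by ring, add_zero, Real.sqrt_sq_eq_abs, abs_mul,
        abs_of_pos hP0]
    push_cast
    rw [this]
    calc c ^ (1 / κ) * P ^ (2 / κ - 1) ≤ 1 := hm1
      _ ≤ P * |(x:ℝ)| := by nlinarith
  · -- y ≠ 0
    set Q : ℝ := (y.natAbs : ℝ) with hQdef
    have hQabs : Q = |(y:ℝ)| := by
      rw [hQdef, Nat.cast_natAbs]
      push_cast; ring
    have hQ1 : (1:ℝ) ≤ Q := by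
      have : 1 ≤ y.natAbs := Int.natAbs_pos.mpr hy
      rw [hQdef]
      exact_mod_cast this
    have hQ0 : (0:ℝ) < Q := lt_of_lt_of_le one_pos hQ1
    have hy0 : ((y:ℝ)) ≠ 0 := Int.cast_ne_zero.mpr hy
    set p : ℤ := if 0 < y then -x else x with hpdef
    have hfrac : (p:ℝ) / Q = -((x:ℝ) / (y:ℝ)) := by
      rcases lt_or_gt_of_ne hy with hneg | hpos
      · have hple : ¬ 0 < y := by omega
        rw [hpdef, if_neg hple, hQabs, abs_of_neg (by exact_mod_cast hneg : ((y:ℝ)) < 0)]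
        rw [div_neg]
      · rw [hpdef, if_pos hpos, hQabs, abs_of_pos (by exact_mod_cast hpos : (0:ℝ) < (y:ℝ))]
        push_cast
        field_simp
    have habs : |α - (p:ℝ) / Q| = |(x:ℝ) + α * y| / Q := by
      rw [hfrac, hQabs, ← abs_div]
      congr 1
      field_simp
      ring
    have hdio' := hdio p y.natAbs (Int.natAbs_pos.mpr hy)
    rw [← hQdef, habs] at hdio'
    have hA : c / Q ^ (κ - 1) ≤ |(x:ℝ) + α * y| := by
      have h2 : c / Q ^ κ * Q ≤ |(x:ℝ) + α * y| / Q * Q :=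
        mul_le_mul_of_nonneg_right hdio' hQ0.le
      rw [div_mul_cancel₀ _ (ne_of_gt hQ0)] at h2
      have hQκ : Q ^ κ = Q ^ (κ - 1) * Q := by
        rw [← Real.rpow_add_one (ne_of_gt hQ0)]
        ring_nf
      calc c / Q ^ (κ - 1) = c / Q ^ κ * Q := by
            rw [hQκ]; field_simp
        _ ≤ _ := h2
    set t : ℝ := Real.sqrt ((P * ((x : ℝ) + α * y)) ^ 2 + ((y : ℝ) / P) ^ 2) with htdef
    have ht1 : P * (c / Q ^ (κ - 1)) ≤ t := by
      have : P * (c / Q ^ (κ - 1)) ≤ |P * ((x:ℝ) + α * y)| := by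
        rw [abs_mul, abs_of_pos hP0]
        exact mul_le_mul_of_nonneg_left hA hP0.le
      refine this.trans ?_
      rw [htdef, ← Real.sqrt_sq_eq_abs]
      exact Real.sqrt_le_sqrt (le_add_of_nonneg_right (by positivity))
    have ht2 : Q / P ≤ t := by
      have : Q / P = |(y:ℝ) / P| := by
        rw [abs_div, abs_of_pos hP0, hQabs]
      rw [this, htdef, ← Real.sqrt_sq_eq_abs]
      exact Real.sqrt_le_sqrt (le_add_of_nonneg_left (by positivity))
    have ht0 : 0 < t := lt_of_lt_of_le (by positivity) ht1
    have hpow : c * P ^ (2 - κ) ≤ t ^ κ := by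
      have htκ : t ^ κ = t ^ (κ - 1) * t := by
        rw [← Real.rpow_add_one (ne_of_gt ht0)]
        ring_nf
      have hmono : (Q / P) ^ (κ - 1) ≤ t ^ (κ - 1) :=
        Real.rpow_le_rpow (by positivity) ht2 (by linarith)
      have hprod : (Q / P) ^ (κ - 1) * (P * (c / Q ^ (κ - 1))) ≤ t ^ (κ - 1) * t :=
        mul_le_mul hmono ht1 (by positivity) (by positivity)
      have heq : (Q / P) ^ (κ - 1) * (P * (c / Q ^ (κ - 1))) = c * P ^ (2 - κ) := by
        rw [Real.div_rpow hQ0.le hP0.le]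
        have hPκ : P ^ (2 - κ) * P ^ (κ - 1) = P := by
          rw [← Real.rpow_add hP0]
          norm_num
        have hQκ0 : (0:ℝ) < Q ^ (κ - 1) := Real.rpow_pos_of_pos hQ0 _
        have hPκ0 : (0:ℝ) < P ^ (κ - 1) := Real.rpow_pos_of_pos hP0 _
        field_simp
        linear_combination (-1 : ℝ) * hPκ
      rw [htκ, ← heq]; exact hprod
    have hfin : c ^ (1 / κ) * P ^ (2 / κ - 1) = (c * P ^ (2 - κ)) ^ (1 / κ) := by
      rw [Real.mul_rpow hc.le (Real.rpow_nonneg hP0.le _), ← Real.rpow_mul hP0.le]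
      congr 1
      field_simp
    rw [hfin]
    calc (c * P ^ (2 - κ)) ^ (1 / κ) ≤ (t ^ κ) ^ (1 / κ) :=
          Real.rpow_le_rpow (by positivity) hpow (by positivity)
      _ = t := by
          rw [← Real.rpow_mul ht0.le, mul_one_div, div_self (ne_of_gt hκ0), Real.rpow_one]

theorem stmt_0 (α κ c P : ℝ) (hκ : 2 ≤ κ) (hc : 0 < c)
    (hdio : ∀ (p : ℤ) (q : ℕ), 0 < q → c / (q : ℝ) ^ κ ≤ |α - (p : ℝ) / (q : ℝ)|)
    (hP : 2 / Real.sqrt 3 < P) :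
    (sInf {r : ℝ | ∃ x y : ℤ, ¬(x = 0 ∧ y = 0) ∧
        r = Real.sqrt ((P * ((x : ℝ) + α * y)) ^ 2 + ((y : ℝ) / P) ^ 2)})⁻¹
      ≤ c ^ (-(1 / κ)) * P ^ (1 - 2 / κ) := by
  have h32 : Real.sqrt 3 < 2 := by
    rw [show (2:ℝ) = Real.sqrt 4 by
      rw [show (4:ℝ) = 2 ^ 2 by norm_num, Real.sqrt_sq (by norm_num)]]
    exact Real.sqrt_lt_sqrt (by norm_num) (by norm_num)
  have h3pos : (0:ℝ) < Real.sqrt 3 := Real.sqrt_pos.mpr (by norm_num)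
  have hP1 : 1 < P := lt_trans (by rw [lt_div_iff₀ h3pos]; linarith) hP
  have hP0 : (0:ℝ) < P := lt_trans one_pos hP1
  have hκ0 : (0:ℝ) < κ := by linarith
  have hc1 : c ≤ 1 := by
    have := hdio (round α) 1 one_pos
    simp only [Nat.cast_one, Real.one_rpow, div_one] at this
    have h2 := abs_sub_round α
    linarith [this.trans h2]
  set m : ℝ := c ^ (1 / κ) * P ^ (2 / κ - 1) with hmdef
  have hm0 : 0 < m := by
    rw [hmdef]
    exact mul_pos (Real.rpow_pos_of_pos hc _) (Real.rpow_pos_of_pos hP0 _)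
  set S : Set ℝ := {r : ℝ | ∃ x y : ℤ, ¬(x = 0 ∧ y = 0) ∧
        r = Real.sqrt ((P * ((x : ℝ) + α * y)) ^ 2 + ((y : ℝ) / P) ^ 2)} with hSdef
  have hne : S.Nonempty :=
    ⟨Real.sqrt ((P * (((1:ℤ) : ℝ) + α * ((0:ℤ):ℝ))) ^ 2 + (((0:ℤ) : ℝ) / P) ^ 2),
      1, 0, by norm_num, rfl⟩
  have hlb : m ≤ sInf S := by
    apply le_csInf hne
    rintro r ⟨x, y, hxy, rfl⟩
    exact key_lb α κ c P hκ hc hc1 hdio hP1 x y hxy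
  have hfinal : (sInf S)⁻¹ ≤ m⁻¹ := inv_anti₀ hm0 hlb
  refine hfinal.trans_eq ?_
  rw [hmdef, mul_inv, ← Real.rpow_neg hc.le, ← Real.rpow_neg hP0.le,
    show -(2 / κ - 1) = 1 - 2 / κ by ring]
end

section
/- The first successive minimum of any unimodular lattice in ℝ² is at most 2/√3: for every Δ = g·ℤ² with g ∈ SL₂(ℝ), there exists a nonzero v ∈ Δ with ‖v‖ ≤ 2/√3. -/
open UpperHalfPlane Complex

set_option maxHeartbeats 1000000

theorem stmt_2 (g : Matrix (Fin 2) (Fin 2) ℝ) (hg : g.det = 1) :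
    ∃ x y : ℤ, ¬(x = 0 ∧ y = 0) ∧
      Real.sqrt ((g 0 0 * x + g 0 1 * y) ^ 2 + (g 1 0 * x + g 1 1 * y) ^ 2)
        ≤ 2 / Real.sqrt 3 := by
  have hdet : g 0 0 * g 1 1 - g 0 1 * g 1 0 = 1 := by
    rw [← hg, Matrix.det_fin_two]
  set w1 : ℂ := ⟨g 0 0, g 1 0⟩ with hw1
  set w2 : ℂ := ⟨g 0 1, g 1 1⟩ with hw2
  have hw1ne : w1 ≠ 0 := by
    intro h
    rw [Complex.ext_iff] at h
    simp only [hw1, Complex.zero_re, Complex.zero_im] at h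
    obtain ⟨h1, h2⟩ := h
    rw [h1, h2] at hdet
    norm_num at hdet
  have hns : 0 < Complex.normSq w1 := Complex.normSq_pos.2 hw1ne
  have him : (w2 / w1).im = 1 / Complex.normSq w1 := by
    rw [Complex.div_im, div_sub_div_same]
    congr 1
    show g 1 1 * g 0 0 - g 0 1 * g 1 0 = 1
    linarith [hdet]
  have hz : 0 < (w2 / w1).im := by rw [him]; positivity
  let zh : UpperHalfPlane := ⟨w2 / w1, hz⟩
  obtain ⟨γ, hγ⟩ := ModularGroup.exists_smul_mem_fd zh
  set c : ℤ := γ 1 0 with hc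
  set d : ℤ := γ 1 1 with hd
  refine ⟨d, c, ?_, ?_⟩
  · rintro ⟨hd0, hc0⟩
    have hγdet : (γ : Matrix (Fin 2) (Fin 2) ℤ).det = 1 := γ.2
    rw [Matrix.det_fin_two] at hγdet
    rw [← hc, ← hd] at hγdet
    rw [hd0, hc0] at hγdet
    simp at hγdet
  · -- main bound
    have hden : UpperHalfPlane.denom γ zh = (c : ℂ) * (w2 / w1) + (d : ℂ) := by
      rw [ModularGroup.denom_apply]
    have hmul : w1 * ((c : ℂ) * (w2 / w1) + (d : ℂ)) = (c : ℂ) * w2 + (d : ℂ) * w1 := by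
      field_simp
    have hNS : Complex.normSq w1 * Complex.normSq (UpperHalfPlane.denom γ zh)
        = Complex.normSq ((c : ℂ) * w2 + (d : ℂ) * w1) := by
      rw [hden, ← Complex.normSq_mul, hmul]
    have hS : (g 0 0 * (d : ℝ) + g 0 1 * (c : ℝ)) ^ 2 + (g 1 0 * (d : ℝ) + g 1 1 * (c : ℝ)) ^ 2
        = Complex.normSq ((c : ℂ) * w2 + (d : ℂ) * w1) := by
      rw [Complex.normSq_apply]
      simp only [Complex.add_re, Complex.add_im, Complex.mul_re, Complex.mul_im,
        Complex.intCast_re, Complex.intCast_im, hw1, hw2]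
      ring
    -- the imaginary part of γ • zh
    set t : ℝ := (γ • zh).im with ht
    have htpos : 0 < t := (γ • zh).im_pos
    have htval : t = zh.im / Complex.normSq (UpperHalfPlane.denom γ zh) :=
      ModularGroup.im_smul_eq_div_normSq γ zh
    have hzhim : zh.im = 1 / Complex.normSq w1 := him
    have hdenpos : 0 < Complex.normSq (UpperHalfPlane.denom γ zh) :=
      Complex.normSq_pos.2 (UpperHalfPlane.denom_ne_zero _ _)
    -- t * (N1 * N2) = 1
    have hprod : t * (Complex.normSq w1 * Complex.normSq (UpperHalfPlane.denom γ zh)) = 1 := by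
      rw [htval, hzhim]
      field_simp
    -- lower bound on t from fundamental domain
    have h1 : 1 ≤ Complex.normSq ((γ • zh : UpperHalfPlane) : ℂ) := hγ.1
    have h2 : |(γ • zh).re| ≤ 1 / 2 := hγ.2
    have hre2 : ((γ • zh).re) ^ 2 ≤ 1 / 4 := by
      nlinarith [abs_nonneg (γ • zh).re, _root_.sq_abs (γ • zh).re, h2]
    have hnseq : Complex.normSq ((γ • zh : UpperHalfPlane) : ℂ)
        = (γ • zh).re ^ 2 + t ^ 2 := by
      rw [Complex.normSq_apply, UpperHalfPlane.coe_re, UpperHalfPlane.coe_im, ht]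
      ring
    have ht2 : 3 / 4 ≤ t ^ 2 := by
      rw [hnseq] at h1; linarith
    have hsqrt3 : Real.sqrt 3 ^ 2 = 3 := Real.sq_sqrt (by norm_num)
    have hsqrt3pos : 0 < Real.sqrt 3 := Real.sqrt_pos.2 (by norm_num)
    have htge : Real.sqrt 3 / 2 ≤ t := by
      nlinarith [htpos, ht2, hsqrt3, hsqrt3pos]
    -- conclude: N1 * N2 = 1 / t ≤ 2 / √3 ≤ 4/3
    have hSle : Complex.normSq w1 * Complex.normSq (UpperHalfPlane.denom γ zh)
        ≤ (2 / Real.sqrt 3) ^ 2 := by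
      have hsq : (2 / Real.sqrt 3) ^ 2 = 4 / 3 := by
        rw [div_pow, hsqrt3]; norm_num
      rw [hsq]
      have ht34 : 3 / 4 ≤ t := by nlinarith [hsqrt3, hsqrt3pos, htge]
      set S := Complex.normSq w1 * Complex.normSq (UpperHalfPlane.denom γ zh) with hSdef
      have hSpos : 0 < S := mul_pos hns hdenpos
      nlinarith [hprod, ht34, hSpos, htpos]
    rw [hS, ← hNS]
    calc Real.sqrt (Complex.normSq w1 * Complex.normSq (UpperHalfPlane.denom γ zh))
        ≤ Real.sqrt ((2 / Real.sqrt 3) ^ 2) := Real.sqrt_le_sqrt hSle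
      _ = 2 / Real.sqrt 3 := Real.sqrt_sq (by positivity)
end

section
/- Let P, Q > 0, α ∈ ℝ, C > 0, u ∈ ℝ², and Z, ζ > 0. Then the sum over v in the lattice Δ^α_{P,Q} = {(P(x+αy), Qy) : x,y ∈ ℤ} of exp(−C‖v+u‖²) is at most (1 + 𝒩(√2(Zζ)^{1/2})) · Σ_{w ∈ Δ^0_{Pζ, QZ}} exp(−C‖w‖²/4), where 𝒩(r) counts points of norm ≤ r in the unimodular lattice Δ^α_{(Z/ζ)^{1/2}} = {((Z/ζ)^{1/2}(x+αz), (ζ/Z)^{1/2} z) : x,z ∈ ℤ} and Δ^0_{Pζ,QZ} = {(Pζ·m₁, QZ·m₂) : m₁,m₂ ∈ ℤ}. -/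
open scoped Classical

lemma abs_sub_round_mul (c t : ℝ) (hc : 0 < c) : |t - c * (round (t/c) : ℤ)| ≤ c / 2 := by
  have h := abs_sub_round (t/c)
  have e : t - c * (round (t/c) : ℤ) = c * (t/c - (round (t/c) : ℤ)) := by field_simp
  rw [e, abs_mul, abs_of_pos hc]
  calc c * |t/c - (round (t/c) : ℤ)| ≤ c * (1/2) := by
        exact mul_le_mul_of_nonneg_left h hc.le
    _ = c / 2 := by ring

lemma round_sq_le (c t : ℝ) (hc : 0 < c) : (c * (round (t/c) : ℤ))^2 / 4 ≤ t^2 := by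
  set m : ℤ := round (t/c) with hm
  rcases eq_or_ne m 0 with h0 | h0
  · simp [h0]; positivity
  · have h2 := abs_sub_round_mul c t hc
    have hm1 : (1:ℝ) ≤ |(m:ℝ)| := by
      have : (1:ℤ) ≤ |m| := Int.one_le_abs h0
      calc (1:ℝ) = ((1:ℤ):ℝ) := by norm_num
        _ ≤ ((|m|:ℤ):ℝ) := by exact_mod_cast this
        _ = |(m:ℝ)| := by push_cast; ring
    have hA : c ≤ |c*(m:ℝ)| := by
      rw [abs_mul, abs_of_pos hc]; nlinarith
    have hT : |c*(m:ℝ)| - c/2 ≤ |t| := by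
      have h3 := abs_sub_abs_le_abs_sub (c*(m:ℝ)) t
      rw [abs_sub_comm] at h3; linarith
    have h4 : |c*(m:ℝ)|/2 ≤ |t| := by linarith
    nlinarith [mul_le_mul h4 h4 (by positivity) (abs_nonneg t), sq_abs t, sq_abs (c*(m:ℝ))]

lemma round_eq_close {c t t' : ℝ} (hc : 0 < c) (h : round (t/c) = round (t'/c)) :
    |t - t'| ≤ c := by
  have h1 := abs_sub_round_mul c t hc
  have h2 := abs_sub_round_mul c t' hc
  rw [← h] at h2
  calc |t - t'| = |(t - c * (round (t/c) : ℤ)) - (t' - c * (round (t/c) : ℤ))| := by ring_nf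
    _ ≤ |t - c * (round (t/c) : ℤ)| + |t' - c * (round (t/c) : ℤ)| := abs_sub _ _
    _ ≤ c := by linarith

lemma summable_gauss_nat (b : ℝ) (hb : 0 < b) :
    Summable fun n : ℕ => Real.exp (-b * (n:ℝ)^2) := by
  have hs : Summable fun n : ℕ => Real.exp (-b) ^ n :=
    summable_geometric_of_lt_one (Real.exp_pos _).le
      (Real.exp_lt_one_iff.mpr (by linarith))
  refine Summable.of_nonneg_of_le (fun n => (Real.exp_pos _).le) (fun n => ?_) hs
  rw [← Real.exp_nat_mul]
  apply Real.exp_le_exp.mpr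
  have h1 : (n:ℝ) ≤ (n:ℝ)^2 := by exact_mod_cast Nat.le_self_pow two_ne_zero n
  nlinarith

lemma summable_gauss_int (b : ℝ) (hb : 0 < b) :
    Summable fun n : ℤ => Real.exp (-b * (n:ℝ)^2) := by
  apply Summable.of_nat_of_neg
  · exact summable_gauss_nat b hb
  · exact (summable_gauss_nat b hb).congr (by intro n; push_cast; ring_nf)

theorem stmt_3 (P Q α C : ℝ) (hP : 0 < P) (hQ : 0 < Q) (hC : 0 < C)
    (u : ℝ × ℝ) (Z ζ : ℝ) (hZ : 0 < Z) (hζ : 0 < ζ) :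
    (∑' p : ℤ × ℤ,
        Real.exp (-C * ((P * ((p.1 : ℝ) + α * p.2) + u.1) ^ 2 + (Q * (p.2 : ℝ) + u.2) ^ 2)))
      ≤ (1 + (Set.ncard {p : ℤ × ℤ |
            Real.sqrt ((Real.sqrt (Z / ζ) * ((p.1 : ℝ) + α * p.2)) ^ 2
              + (Real.sqrt (ζ / Z) * (p.2 : ℝ)) ^ 2)
            ≤ Real.sqrt 2 * Real.sqrt (Z * ζ)} : ℝ)) *
        ∑' m : ℤ × ℤ,
          Real.exp (-C * ((P * ζ * (m.1 : ℝ)) ^ 2 + (Q * Z * (m.2 : ℝ)) ^ 2) / 4) := by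
  set B : Set (ℤ × ℤ) := {p : ℤ × ℤ |
      Real.sqrt ((Real.sqrt (Z / ζ) * ((p.1 : ℝ) + α * p.2)) ^ 2
        + (Real.sqrt (ζ / Z) * (p.2 : ℝ)) ^ 2)
      ≤ Real.sqrt 2 * Real.sqrt (Z * ζ)} with hB
  set f : ℤ × ℤ → ℝ := fun p =>
    Real.exp (-C * ((P * ((p.1 : ℝ) + α * p.2) + u.1) ^ 2 + (Q * (p.2 : ℝ) + u.2) ^ 2)) with hf
  set g : ℤ × ℤ → ℝ := fun m =>
    Real.exp (-C * ((P * ζ * (m.1 : ℝ)) ^ 2 + (Q * Z * (m.2 : ℝ)) ^ 2) / 4) with hg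
  have hgpos : ∀ m, 0 ≤ g m := fun m => (Real.exp_pos _).le
  have hPζ : 0 < P * ζ := mul_pos hP hζ
  have hQZ : 0 < Q * Z := mul_pos hQ hZ
  set φ : ℤ × ℤ → ℤ × ℤ := fun p =>
    (round ((P * ((p.1 : ℝ) + α * p.2) + u.1) / (P * ζ)),
     round ((Q * (p.2 : ℝ) + u.2) / (Q * Z))) with hφ
  -- basic sqrt facts
  have hsq1 : Real.sqrt (Z/ζ) ^ 2 = Z/ζ := Real.sq_sqrt (by positivity)
  have hsq2 : Real.sqrt (ζ/Z) ^ 2 = ζ/Z := Real.sq_sqrt (by positivity)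
  have hR : (Real.sqrt 2 * Real.sqrt (Z*ζ)) ^ 2 = 2*(Z*ζ) := by
    rw [mul_pow, Real.sq_sqrt (by norm_num : (0:ℝ) ≤ 2), Real.sq_sqrt (by positivity)]
  -- membership criteria for B
  have hBsub : ∀ q : ℤ × ℤ, q ∈ B →
      ((q.1:ℝ) + α * q.2)^2 ≤ 2*ζ^2 ∧ ((q.2:ℝ))^2 ≤ 2*Z^2 := by
    intro q hq
    simp only [hB, Set.mem_setOf_eq] at hq
    have hE0 : 0 ≤ (Real.sqrt (Z/ζ) * ((q.1:ℝ) + α * q.2))^2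
        + (Real.sqrt (ζ/Z) * (q.2:ℝ))^2 := by positivity
    have hE : (Real.sqrt (Z/ζ) * ((q.1:ℝ) + α * q.2))^2
        + (Real.sqrt (ζ/Z) * (q.2:ℝ))^2 ≤ 2*(Z*ζ) := by
      have h2 := pow_le_pow_left₀ (Real.sqrt_nonneg _) hq 2
      rwa [Real.sq_sqrt hE0, hR] at h2
    rw [mul_pow, mul_pow, hsq1, hsq2] at hE
    have hz1 : 0 ≤ (Z/ζ) * ((q.1:ℝ) + α * q.2)^2 := by positivity
    have hz2 : 0 ≤ (ζ/Z) * ((q.2:ℝ))^2 := by positivity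
    constructor
    · have h1 : (Z/ζ) * ((q.1:ℝ) + α * q.2)^2 ≤ 2*(Z*ζ) := by linarith
      calc ((q.1:ℝ) + α * q.2)^2 = (ζ/Z) * ((Z/ζ) * ((q.1:ℝ) + α * q.2)^2) := by
            field_simp
        _ ≤ (ζ/Z) * (2*(Z*ζ)) := mul_le_mul_of_nonneg_left h1 (by positivity)
        _ = 2*ζ^2 := by field_simp
    · have h1 : (ζ/Z) * ((q.2:ℝ))^2 ≤ 2*(Z*ζ) := by linarith
      calc ((q.2:ℝ))^2 = (Z/ζ) * ((ζ/Z) * ((q.2:ℝ))^2) := by field_simp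
        _ ≤ (Z/ζ) * (2*(Z*ζ)) := mul_le_mul_of_nonneg_left h1 (by positivity)
        _ = 2*Z^2 := by field_simp
  have hBmem : ∀ q : ℤ × ℤ, |(q.1:ℝ) + α * q.2| ≤ ζ → |(q.2:ℝ)| ≤ Z → q ∈ B := by
    intro q h1 h2
    simp only [hB, Set.mem_setOf_eq]
    have e1 : ((q.1:ℝ) + α * q.2)^2 ≤ ζ^2 := by
      rw [← sq_abs]; exact pow_le_pow_left₀ (abs_nonneg _) h1 2
    have e2 : ((q.2:ℝ))^2 ≤ Z^2 := by
      rw [← sq_abs]; exact pow_le_pow_left₀ (abs_nonneg _) h2 2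
    have hEle : (Real.sqrt (Z/ζ) * ((q.1:ℝ) + α * q.2))^2
        + (Real.sqrt (ζ/Z) * (q.2:ℝ))^2 ≤ 2*(Z*ζ) := by
      rw [mul_pow, mul_pow, hsq1, hsq2]
      calc (Z/ζ) * ((q.1:ℝ) + α * q.2)^2 + (ζ/Z) * ((q.2:ℝ))^2
          ≤ (Z/ζ) * ζ^2 + (ζ/Z) * Z^2 :=
            add_le_add (mul_le_mul_of_nonneg_left e1 (by positivity))
              (mul_le_mul_of_nonneg_left e2 (by positivity))
        _ = 2*(Z*ζ) := by field_simp; ring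
    calc Real.sqrt ((Real.sqrt (Z/ζ) * ((q.1:ℝ) + α * q.2))^2
          + (Real.sqrt (ζ/Z) * (q.2:ℝ))^2)
        ≤ Real.sqrt (2*(Z*ζ)) := Real.sqrt_le_sqrt hEle
      _ = Real.sqrt 2 * Real.sqrt (Z*ζ) := Real.sqrt_mul (by norm_num) _
  -- finiteness of B
  have hBfin : B.Finite := by
    apply Set.Finite.subset (Set.finite_Icc
      ((-⌈2*ζ + |α| * (2 * Z)⌉, -⌈2*Z⌉) : ℤ × ℤ) ((⌈2*ζ + |α| * (2 * Z)⌉, ⌈2*Z⌉) : ℤ × ℤ))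
    intro q hq
    obtain ⟨h1, h2⟩ := hBsub q hq
    have ht : |(q.1:ℝ) + α * q.2| ≤ 2*ζ := abs_le_of_sq_le_sq (by nlinarith) (by positivity)
    have hy : |(q.2:ℝ)| ≤ 2*Z := abs_le_of_sq_le_sq (by nlinarith) (by positivity)
    have hx : |(q.1:ℝ)| ≤ 2*ζ + |α| * (2 * Z) := by
      have e : (q.1:ℝ) = ((q.1:ℝ) + α * q.2) - α * q.2 := by ring
      rw [e]
      calc |((q.1:ℝ) + α * q.2) - α * q.2|
          ≤ |(q.1:ℝ) + α * q.2| + |α * q.2| := abs_sub _ _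
        _ ≤ 2*ζ + |α| * (2 * Z) := by
            rw [abs_mul]
            exact add_le_add ht (mul_le_mul_of_nonneg_left hy (abs_nonneg α))
    have hx' := abs_le.mp hx
    have hy' := abs_le.mp hy
    have hc1 : (2*ζ + |α| * (2 * Z)) ≤ (⌈2*ζ + |α| * (2 * Z)⌉ : ℝ) := Int.le_ceil _
    have hc2 : (2*Z) ≤ ((⌈2*Z⌉:ℤ) : ℝ) := Int.le_ceil _
    rw [Set.mem_Icc]
    constructor
    · constructor
      · exact_mod_cast (by push_cast; linarith [hx'.1] : ((-⌈2*ζ + |α| * (2 * Z)⌉ : ℤ):ℝ) ≤ (q.1:ℝ))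
      · exact_mod_cast (by push_cast; linarith [hy'.1] : ((-⌈2*Z⌉ : ℤ):ℝ) ≤ (q.2:ℝ))
    · constructor
      · exact_mod_cast (by push_cast; linarith [hx'.2] : (q.1:ℝ) ≤ ((⌈2*ζ + |α| * (2 * Z)⌉ : ℤ):ℝ))
      · exact_mod_cast (by push_cast; linarith [hy'.2] : (q.2:ℝ) ≤ ((⌈2*Z⌉ : ℤ):ℝ))
  -- pointwise bound
  have hpoint : ∀ p : ℤ × ℤ, f p ≤ g (φ p) := by
    intro p
    simp only [hf, hg, hφ]
    apply Real.exp_le_exp.mpr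
    have h1 := round_sq_le (P*ζ) (P * ((p.1:ℝ) + α * p.2) + u.1) hPζ
    have h2 := round_sq_le (Q*Z) (Q * (p.2:ℝ) + u.2) hQZ
    nlinarith [mul_le_mul_of_nonneg_left (add_le_add h1 h2) hC.le]
  -- fiber cardinality bound
  have hcard : ∀ (s : Finset (ℤ × ℤ)) (m : ℤ × ℤ), m ∈ s.image φ →
      (s.filter fun p => φ p = m).card ≤ B.ncard := by
    intro s m hm
    obtain ⟨p₀, hp₀s, hp₀⟩ := Finset.mem_image.mp hm
    rw [Set.ncard_eq_toFinset_card B hBfin]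
    apply Finset.card_le_card_of_injOn (fun p => p - p₀)
    · intro p hp
      simp only [Finset.coe_filter, Set.mem_setOf_eq] at hp
      rw [Finset.mem_coe, Set.Finite.mem_toFinset]
      have heq : φ p = φ p₀ := hp.2.trans hp₀.symm
      have h1 : round ((P * ((p.1:ℝ) + α * p.2) + u.1) / (P*ζ))
          = round ((P * ((p₀.1:ℝ) + α * p₀.2) + u.1) / (P*ζ)) := congrArg Prod.fst heq
      have h2 : round ((Q * (p.2:ℝ) + u.2) / (Q*Z))
          = round ((Q * (p₀.2:ℝ) + u.2) / (Q*Z)) := congrArg Prod.snd heq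
      have hd1 := round_eq_close hPζ h1
      have hd2 := round_eq_close hQZ h2
      have e1 : (P * ((p.1:ℝ) + α * p.2) + u.1) - (P * ((p₀.1:ℝ) + α * p₀.2) + u.1)
          = P * (((p.1:ℝ) - p₀.1) + α * ((p.2:ℝ) - p₀.2)) := by ring
      have e2 : (Q * (p.2:ℝ) + u.2) - (Q * (p₀.2:ℝ) + u.2) = Q * ((p.2:ℝ) - p₀.2) := by ring
      rw [e1, abs_mul, abs_of_pos hP] at hd1
      rw [e2, abs_mul, abs_of_pos hQ] at hd2
      have hd1' : |((p.1:ℝ) - p₀.1) + α * ((p.2:ℝ) - p₀.2)| ≤ ζ :=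
        (mul_le_mul_iff_right₀ hP).mp hd1
      have hd2' : |(p.2:ℝ) - p₀.2| ≤ Z := (mul_le_mul_iff_right₀ hQ).mp hd2
      apply hBmem
      · simpa [Prod.fst_sub, Prod.snd_sub] using hd1'
      · simpa [Prod.snd_sub] using hd2'
    · intro a _ b _ hab
      exact sub_left_inj.mp hab
  -- summability of g
  have hgsum : Summable g := by
    have h1 := summable_gauss_int (C*(P*ζ)^2/4) (by positivity)
    have h2 := summable_gauss_int (C*(Q*Z)^2/4) (by positivity)
    apply (h1.mul_of_nonneg h2 (fun n => (Real.exp_pos _).le)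
      (fun n => (Real.exp_pos _).le)).congr
    intro m
    simp only [hg]
    rw [← Real.exp_add]
    congr 1
    ring
  -- main chain
  refine tsum_le_of_sum_le' ?_ ?_
  · apply mul_nonneg (by positivity) (tsum_nonneg hgpos)
  · intro s
    calc ∑ p ∈ s, f p ≤ ∑ p ∈ s, g (φ p) := Finset.sum_le_sum fun p _ => hpoint p
      _ = ∑ m ∈ s.image φ, (s.filter fun p => φ p = m).card • g m := Finset.sum_comp g φ
      _ ≤ ∑ m ∈ s.image φ, (B.ncard : ℝ) * g m := by
          apply Finset.sum_le_sum
          intro m hm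
          rw [nsmul_eq_mul]
          exact mul_le_mul_of_nonneg_right (by exact_mod_cast hcard s m hm) (hgpos m)
      _ = (B.ncard : ℝ) * ∑ m ∈ s.image φ, g m := (Finset.mul_sum _ _ _).symm
      _ ≤ (B.ncard : ℝ) * ∑' m, g m :=
          mul_le_mul_of_nonneg_left (Summable.sum_le_tsum _ (fun m _ => hgpos m) hgsum)
            (Nat.cast_nonneg _)
      _ ≤ (1 + (B.ncard : ℝ)) * ∑' m, g m := by
          apply mul_le_mul_of_nonneg_right _ (tsum_nonneg hgpos)
          linarith [Nat.cast_nonneg (α := ℝ) B.ncard]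
end

section
/- Let α be Diophantine and ε > 0. Then for N, M ≥ 1, the number of integers z with 1 ≤ z ≤ 2MN and ‖αz‖_ℤ ≤ 1/N is ≪_ε M(MN)^{ε}, where ‖·‖_ℤ is the distance to the nearest integer. -/
open scoped Classical

/-- Distance to the nearest integer. -/
noncomputable def distZ (x : ℝ) : ℝ := |x - round x|

lemma spacing_aux (α ε c : ℝ) (hε : 0 < ε) (hc : 0 < c)
    (H : ∀ (p : ℤ) (q : ℕ), 0 < q → c * (q : ℝ) ^ (-(2 + ε)) ≤ |α - (p : ℝ) / (q : ℝ)|)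
    (N : ℕ) (hN : 1 ≤ N) (z₁ z₂ : ℕ) (h12 : z₁ < z₂)
    (h1 : distZ (α * z₁) ≤ 1 / (N : ℝ)) (h2 : distZ (α * z₂) ≤ 1 / (N : ℝ)) :
    (c * N / 2) ^ ((1:ℝ)/(1+ε)) ≤ ((z₂ - z₁ : ℕ) : ℝ) := by
  set d : ℕ := z₂ - z₁ with hdd
  have hd : 0 < d := Nat.sub_pos_of_lt h12
  have hdR : (0:ℝ) < (d:ℝ) := by exact_mod_cast hd
  have hNR : (0:ℝ) < (N:ℝ) := by exact_mod_cast hN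
  set p : ℤ := round (α * z₂) - round (α * z₁) with hp
  have hcast : ((d:ℕ):ℝ) = (z₂:ℝ) - (z₁:ℝ) := by
    rw [hdd]; push_cast [Nat.cast_sub h12.le]; ring
  have key : |α * d - p| ≤ 2 / N := by
    have e : α * (d:ℝ) - (p:ℝ) =
        (α * z₂ - round (α * z₂)) - (α * z₁ - round (α * z₁)) := by
      rw [hcast, hp]; push_cast; ring
    rw [e]
    calc |(α * z₂ - round (α * z₂)) - (α * z₁ - round (α * z₁))|
        ≤ |α * z₂ - round (α * z₂)| + |α * z₁ - round (α * z₁)| := abs_sub _ _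
      _ ≤ 1/N + 1/N := add_le_add h2 h1
      _ = 2/N := by ring
  have hH := H p d hd
  have habs : |α - (p:ℝ)/(d:ℝ)| = |α * d - p| / d := by
    have e2 : α - (p:ℝ)/(d:ℝ) = (α * d - p) / d := by field_simp
    rw [e2, abs_div, abs_of_pos hdR]
  rw [habs] at hH
  have h3 : c * (d:ℝ) ^ (-(2+ε)) ≤ (2/N) / d := hH.trans (by gcongr)
  have hpow : (d:ℝ) ^ (-(2+ε)) = ((d:ℝ) ^ (1+ε) * d)⁻¹ := by
    rw [Real.rpow_neg hdR.le]
    congr 1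
    rw [show (2:ℝ)+ε = (1+ε)+1 by ring, Real.rpow_add hdR, Real.rpow_one]
  have hde : (0:ℝ) < (d:ℝ) ^ (1+ε) := Real.rpow_pos_of_pos hdR _
  have h4 : c * N / 2 ≤ (d:ℝ) ^ (1+ε) := by
    rw [hpow, ← div_eq_mul_inv] at h3
    rw [div_div] at h3
    rw [div_le_div_iff₀ (by positivity) (by positivity)] at h3
    nlinarith [hdR, hde]
  calc (c * N / 2) ^ ((1:ℝ)/(1+ε))
      ≤ ((d:ℝ) ^ (1+ε)) ^ ((1:ℝ)/(1+ε)) :=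
        Real.rpow_le_rpow (by positivity) h4 (by positivity)
    _ = (d:ℝ) := by
        rw [← Real.rpow_mul hdR.le, mul_one_div_cancel (by positivity), Real.rpow_one]

theorem stmt_6 (α : ℝ)
    (hdio : ∀ δ > (0 : ℝ), ∃ c > (0 : ℝ), ∀ (p : ℤ) (q : ℕ), 0 < q →
      c * (q : ℝ) ^ (-(2 + δ)) ≤ |α - (p : ℝ) / (q : ℝ)|)
    (ε : ℝ) (hε : 0 < ε) :
    ∃ C > (0 : ℝ), ∀ N M : ℕ, 1 ≤ N → 1 ≤ M →
      (((Finset.Icc 1 (2 * M * N)).filter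
          (fun z : ℕ => distZ (α * z) ≤ 1 / (N : ℝ))).card : ℝ)
        ≤ C * (M : ℝ) * ((M : ℝ) * (N : ℝ)) ^ ε := by
  obtain ⟨c, hc, H⟩ := hdio ε hε
  set t : ℝ := 1/(1+ε) with ht
  have ht0 : 0 < t := by positivity
  have ht1 : t ≤ 1 := by
    rw [ht, div_le_one (by positivity)]; linarith
  refine ⟨2 * (2/c) ^ t + 1, by positivity, ?_⟩
  intro N M hN hM
  have hNR : (0:ℝ) < (N:ℝ) := by exact_mod_cast hN
  have hMR : (1:ℝ) ≤ (M:ℝ) := by exact_mod_cast hM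
  set L : ℕ := 2 * M * N with hL
  set D : ℝ := (c * N / 2) ^ t with hD
  have hD0 : 0 < D := Real.rpow_pos_of_pos (by positivity) _
  set S := (Finset.Icc 1 L).filter (fun z : ℕ => distZ (α * z) ≤ 1 / (N : ℝ)) with hS
  -- step 1 : card S ≤ L/D + 1
  have hmaps : ∀ z ∈ S, (⌊(z:ℝ)/D⌋ : ℤ) ∈ Finset.Icc (0:ℤ) ⌊(L:ℝ)/D⌋ := by
    intro z hz
    rw [hS, Finset.mem_filter, Finset.mem_Icc] at hz
    rw [Finset.mem_Icc]
    constructor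
    · exact Int.floor_nonneg.mpr (by positivity)
    · exact Int.floor_le_floor (by gcongr; exact_mod_cast hz.1.2)
  have hinj : ∀ z₁ ∈ S, ∀ z₂ ∈ S, (⌊(z₁:ℝ)/D⌋ : ℤ) = ⌊(z₂:ℝ)/D⌋ → z₁ = z₂ := by
    have key : ∀ z₁ ∈ S, ∀ z₂ ∈ S, z₁ < z₂ → (⌊(z₁:ℝ)/D⌋ : ℤ) < ⌊(z₂:ℝ)/D⌋ := by
      intro z₁ hz₁ z₂ hz₂ hlt
      rw [hS, Finset.mem_filter] at hz₁ hz₂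
      have hsp := spacing_aux α ε c hε hc H N hN z₁ z₂ hlt hz₁.2 hz₂.2
      rw [Nat.cast_sub hlt.le] at hsp
      have hDle : D ≤ (z₂:ℝ) - z₁ := by rw [hD, ht]; exact hsp
      have hdiv : (z₁:ℝ)/D + 1 ≤ (z₂:ℝ)/D := by
        rw [div_add' _ _ _ hD0.ne', div_le_div_iff₀ hD0 hD0]
        nlinarith
      calc (⌊(z₁:ℝ)/D⌋ : ℤ) < ⌊(z₁:ℝ)/D⌋ + 1 := by omega
        _ = ⌊(z₁:ℝ)/D + 1⌋ := (Int.floor_add_one _).symm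
        _ ≤ ⌊(z₂:ℝ)/D⌋ := Int.floor_le_floor hdiv
    intro z₁ hz₁ z₂ hz₂ he
    rcases lt_trichotomy z₁ z₂ with h | h | h
    · exact absurd he (key z₁ hz₁ z₂ hz₂ h).ne
    · exact h
    · exact absurd he.symm (key z₂ hz₂ z₁ hz₁ h).ne
  have hcard : S.card ≤ (Finset.Icc (0:ℤ) ⌊(L:ℝ)/D⌋).card :=
    Finset.card_le_card_of_injOn _ hmaps hinj
  have hcard2 : (S.card : ℝ) ≤ (L:ℝ)/D + 1 := by
    have h1 : (Finset.Icc (0:ℤ) ⌊(L:ℝ)/D⌋).card = (⌊(L:ℝ)/D⌋ + 1).toNat := by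
      rw [Int.card_Icc]; ring_nf
    have h2 : ((⌊(L:ℝ)/D⌋ + 1).toNat : ℝ) ≤ (L:ℝ)/D + 1 := by
      have hfl : (0:ℤ) ≤ ⌊(L:ℝ)/D⌋ := Int.floor_nonneg.mpr (by positivity)
      have e3 : ((⌊(L:ℝ)/D⌋ + 1).toNat : ℝ) = ((⌊(L:ℝ)/D⌋ : ℝ) + 1) := by
        rw [show ((⌊(L:ℝ)/D⌋ + 1).toNat : ℝ) = (((⌊(L:ℝ)/D⌋ + 1).toNat : ℤ) : ℝ) by push_cast; ring,
          Int.toNat_of_nonneg (by omega)]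
        push_cast; ring
      rw [e3]
      have := Int.floor_le ((L:ℝ)/D)
      linarith
    calc (S.card : ℝ) ≤ ((Finset.Icc (0:ℤ) ⌊(L:ℝ)/D⌋).card : ℝ) := by exact_mod_cast hcard
      _ = ((⌊(L:ℝ)/D⌋ + 1).toNat : ℝ) := by rw [h1]
      _ ≤ (L:ℝ)/D + 1 := h2
  -- step 2 : L/D ≤ 2 (2/c)^t M (MN)^ε
  have hMN1 : (1:ℝ) ≤ (M:ℝ) * (N:ℝ) := by
    have : (1:ℝ) ≤ (N:ℝ) := by exact_mod_cast hN
    nlinarith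
  have hNt : (N:ℝ) ^ (1 - t) ≤ ((M:ℝ) * (N:ℝ)) ^ ε := by
    have h1t : 1 - t ≤ ε := by
      have hpos : (0:ℝ) < 1 + ε := by linarith
      have h5 : 1 - ε ≤ 1/(1+ε) := by rw [le_div_iff₀ hpos]; nlinarith
      rw [ht]; linarith
    calc (N:ℝ) ^ (1 - t) ≤ (N:ℝ) ^ ε :=
          Real.rpow_le_rpow_of_exponent_le (by exact_mod_cast hN) h1t
      _ ≤ ((M:ℝ) * (N:ℝ)) ^ ε := by
          apply Real.rpow_le_rpow hNR.le _ hε.le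
          nlinarith
  have hone : (1:ℝ) ≤ ((M:ℝ) * (N:ℝ)) ^ ε := by
    calc (1:ℝ) = ((M:ℝ) * (N:ℝ)) ^ (0:ℝ) := (Real.rpow_zero _).symm
      _ ≤ ((M:ℝ) * (N:ℝ)) ^ ε := Real.rpow_le_rpow_of_exponent_le hMN1 hε.le
  have hLD : (L:ℝ)/D = 2 * (2/c) ^ t * (M:ℝ) * (N:ℝ) ^ (1 - t) := by
    rw [div_eq_iff hD0.ne', hD]
    have e1 : c * (N:ℝ) / 2 = (c/2) * (N:ℝ) := by ring
    rw [e1, Real.mul_rpow (by positivity) hNR.le]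
    have hinv : (2/c) ^ t * (c/2) ^ t = 1 := by
      rw [← Real.mul_rpow (by positivity) (by positivity),
        show (2/c) * (c/2) = 1 by field_simp, Real.one_rpow]
    have hNadd : (N:ℝ) ^ (1 - t) * (N:ℝ) ^ t = (N:ℝ) := by
      rw [← Real.rpow_add hNR, sub_add_cancel, Real.rpow_one]
    have : (L:ℕ) = 2 * M * N := hL
    push_cast [this]
    rw [show (2:ℝ) * (2/c) ^ t * M * (N:ℝ) ^ (1-t) * ((c/2) ^ t * (N:ℝ) ^ t)
        = 2 * M * (((2/c) ^ t * (c/2) ^ t) * ((N:ℝ) ^ (1-t) * (N:ℝ) ^ t)) by ring,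
      hinv, hNadd]
    ring
  -- finish
  have h2c : (0:ℝ) < (2/c) ^ t := Real.rpow_pos_of_pos (by positivity) _
  calc (S.card : ℝ) ≤ (L:ℝ)/D + 1 := hcard2
    _ = 2 * (2/c) ^ t * (M:ℝ) * (N:ℝ) ^ (1 - t) + 1 := by rw [hLD]
    _ ≤ 2 * (2/c) ^ t * (M:ℝ) * (((M:ℝ) * (N:ℝ)) ^ ε) + (M:ℝ) * ((M:ℝ) * (N:ℝ)) ^ ε := by
        have ha : 2 * (2/c) ^ t * (M:ℝ) * (N:ℝ) ^ (1-t)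
            ≤ 2 * (2/c) ^ t * (M:ℝ) * (((M:ℝ) * (N:ℝ)) ^ ε) :=
          mul_le_mul_of_nonneg_left hNt (by positivity)
        have hb : (1:ℝ) ≤ (M:ℝ) * ((M:ℝ) * (N:ℝ)) ^ ε := by nlinarith
        linarith
    _ = (2 * (2/c) ^ t + 1) * (M:ℝ) * ((M:ℝ) * (N:ℝ)) ^ ε := by ring
end

section
/- Let α be Diophantine and ε > 0. Then for N, M ≥ 1, Σ_{1≤z≤2NM, ‖αz‖_ℤ > 1/N} 1/‖αz‖_ℤ ≪_ε (MN)^{1+ε}. -/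
open scoped Classical

lemma aux_abs_min {X Y η : ℝ} (h1 : η ≤ |X - Y|) (h2 : η ≤ |X + Y|) :
    η ≤ |(|X| - |Y|)| := by
  rcases abs_cases X with ⟨e1, _⟩ | ⟨e1, _⟩ <;>
  rcases abs_cases Y with ⟨e2, _⟩ | ⟨e2, _⟩ <;>
  rcases abs_cases (X - Y) with ⟨e3, _⟩ | ⟨e3, _⟩ <;>
  rcases abs_cases (X + Y) with ⟨e4, _⟩ | ⟨e4, _⟩ <;>
  rcases abs_cases (|X| - |Y|) with ⟨e5, _⟩ | ⟨e5, _⟩ <;>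
  linarith

lemma aux_rpow_anti {a b t : ℝ} (ha : 0 < a) (hab : a ≤ b) (ht : 0 ≤ t) :
    b ^ (-t) ≤ a ^ (-t) := by
  rw [Real.rpow_neg (le_of_lt ha), Real.rpow_neg (by linarith)]
  exact inv_anti₀ (Real.rpow_pos_of_pos ha t) (Real.rpow_le_rpow ha.le hab ht)

set_option maxHeartbeats 1000000

theorem stmt_7 (α : ℝ)
    (hdio : ∀ δ > (0 : ℝ), ∃ c > (0 : ℝ), ∀ (p : ℤ) (q : ℕ), 0 < q →
      c * (q : ℝ) ^ (-(2 + δ)) ≤ |α - (p : ℝ) / (q : ℝ)|)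
    (ε : ℝ) (hε : 0 < ε) :
    ∃ C > (0 : ℝ), ∀ N M : ℕ, 1 ≤ N → 1 ≤ M →
      (∑ z ∈ (Finset.Icc 1 (2 * N * M)).filter
          (fun z : ℕ => 1 / (N : ℝ) < distZ (α * z)),
        1 / distZ (α * z))
        ≤ C * ((M : ℝ) * (N : ℝ)) ^ ((1 : ℝ) + ε) := by
  set δ : ℝ := ε / 2 with hδdef
  have hδ : 0 < δ := by positivity
  obtain ⟨c, hc, hdc⟩ := hdio δ hδ
  -- the workhorse: |αq - m| ≥ c q^{-(1+δ)}
  have hA : ∀ (m : ℤ) (q : ℕ), 1 ≤ q → c * (q : ℝ) ^ (-(1 + δ)) ≤ |α * q - m| := by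
    intro m q hq
    have hq0 : (0 : ℝ) < q := by exact_mod_cast hq
    have h := hdc m q hq
    have h2 : |α - (m : ℝ) / q| = |α * q - m| / q := by
      rw [← abs_of_pos hq0, ← abs_div, abs_of_pos hq0]
      congr 1
      field_simp
    rw [h2, le_div_iff₀ hq0] at h
    have h3 : (q : ℝ) ^ (-(2 + δ)) * (q : ℝ) = (q : ℝ) ^ (-(1 + δ)) := by
      have h4 := Real.rpow_add hq0 (-(2 + δ)) 1
      rw [Real.rpow_one] at h4
      rw [← h4]
      congr 1
      ring
    calc c * (q : ℝ) ^ (-(1 + δ)) = c * (q : ℝ) ^ (-(2 + δ)) * q := by rw [mul_assoc, h3]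
      _ ≤ |α * q - m| := h
  -- c ≤ 1/2
  have hc2 : c ≤ 1 / 2 := by
    have h := hdc (round α) 1 one_pos
    simp only [Nat.cast_one, Real.one_rpow, div_one, mul_one] at h
    exact h.trans (abs_sub_round α)
  set A : ℝ := 4 ^ ((1 : ℝ) + δ) / c with hAdef
  have hA0 : 0 < A := by positivity
  set C : ℝ := 1 + A * (1 + |Real.log A|) + A * (1 + δ) / δ with hCdef
  refine ⟨C, by positivity, ?_⟩
  intro N M hN hM
  set x : ℝ := (M : ℝ) * (N : ℝ) with hxdef
  have hN0 : (0 : ℝ) < N := by exact_mod_cast hN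
  have hM0 : (0 : ℝ) < M := by exact_mod_cast hM
  have hx1 : (1 : ℝ) ≤ x := by
    have : (1 : ℝ) ≤ (M : ℝ) := by exact_mod_cast hM
    have h2 : (1 : ℝ) ≤ (N : ℝ) := by exact_mod_cast hN
    nlinarith
  have hx0 : (0 : ℝ) < x := by linarith
  set η : ℝ := c * (4 * x) ^ (-(1 + δ)) with hηdef
  have hη : 0 < η := by positivity
  have hη2 : η ≤ 1 / 2 := by
    have h1 : (4 * x) ^ (-(1 + δ)) ≤ 1 := by
      apply Real.rpow_le_one_of_one_le_of_nonpos (by linarith) (by linarith)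
    calc η ≤ c * 1 := by
            apply mul_le_mul_of_nonneg_left h1 hc.le
      _ ≤ 1 / 2 := by linarith
  -- cast bound for z ∈ Icc 1 Z
  have hZx : ∀ z : ℕ, z ≤ 2 * N * M → (z : ℝ) ≤ 2 * x := by
    intro z hz
    have : (z : ℝ) ≤ ((2 * N * M : ℕ) : ℝ) := by exact_mod_cast hz
    push_cast at this
    nlinarith
  -- separation
  have hsepa : ∀ z₁ z₂ : ℕ, z₂ < z₁ → z₁ ≤ 2 * N * M → 1 ≤ z₂ →
      η ≤ |distZ (α * z₁) - distZ (α * z₂)| := by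
    intro z₁ z₂ hlt hz₁ hz₂
    set X : ℝ := α * z₁ - round (α * z₁) with hX
    set Y : ℝ := α * z₂ - round (α * z₂) with hY
    have hmono : ∀ q : ℕ, 1 ≤ q → (q : ℝ) ≤ 4 * x → η ≤ c * (q : ℝ) ^ (-(1 + δ)) := by
      intro q hq hqx
      have hq0 : (0 : ℝ) < q := by exact_mod_cast hq
      exact mul_le_mul_of_nonneg_left (aux_rpow_anti hq0 hqx (by linarith)) hc.le
    have h1 : η ≤ |X - Y| := by
      have hq : 1 ≤ z₁ - z₂ := by omega
      have hcast : ((z₁ - z₂ : ℕ) : ℝ) = (z₁ : ℝ) - z₂ := by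
        push_cast [Nat.cast_sub hlt.le]
        ring
      have hqx : ((z₁ - z₂ : ℕ) : ℝ) ≤ 4 * x := by
        have := hZx z₁ hz₁
        have h2 : ((z₁ - z₂ : ℕ) : ℝ) ≤ (z₁ : ℝ) := by
          rw [hcast]; have : (0:ℝ) ≤ (z₂:ℝ) := Nat.cast_nonneg _; linarith
        linarith
      have h := hA (round (α * z₁) - round (α * z₂)) (z₁ - z₂) hq
      have heq : α * ((z₁ - z₂ : ℕ) : ℝ) - ((round (α * z₁) - round (α * z₂) : ℤ) : ℝ)
          = X - Y := by
        rw [hcast]; push_cast; ring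
      rw [heq] at h
      exact (hmono _ hq hqx).trans h
    have h2 : η ≤ |X + Y| := by
      have hq : 1 ≤ z₁ + z₂ := by omega
      have hqx : ((z₁ + z₂ : ℕ) : ℝ) ≤ 4 * x := by
        have ha := hZx z₁ hz₁
        have hb := hZx z₂ (by omega)
        push_cast
        linarith
      have h := hA (round (α * z₁) + round (α * z₂)) (z₁ + z₂) hq
      have heq : α * ((z₁ + z₂ : ℕ) : ℝ) - ((round (α * z₁) + round (α * z₂) : ℤ) : ℝ)
          = X + Y := by
        push_cast; ring
      rw [heq] at h
      exact (hmono _ hq hqx).trans h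
    show η ≤ |(|X| - |Y|)|
    exact aux_abs_min h1 h2
  have hsep : ∀ z₁ z₂ : ℕ, 1 ≤ z₁ → z₁ ≤ 2 * N * M → 1 ≤ z₂ → z₂ ≤ 2 * N * M → z₁ ≠ z₂ →
      η ≤ |distZ (α * z₁) - distZ (α * z₂)| := by
    intro z₁ z₂ h1 h2 h3 h4 hne
    rcases lt_or_gt_of_ne hne with h | h
    · rw [abs_sub_comm]; exact hsepa z₂ z₁ h h4 h1
    · exact hsepa z₁ z₂ h h2 h3
  set S := (Finset.Icc 1 (2 * N * M)).filter
      (fun z : ℕ => 1 / (N : ℝ) < distZ (α * z)) with hSdef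
  have hmemS : ∀ z ∈ S, 1 / (N : ℝ) < distZ (α * z) ∧ 1 ≤ z ∧ z ≤ 2 * N * M := by
    intro z hz
    rw [hSdef, Finset.mem_filter, Finset.mem_Icc] at hz
    exact ⟨hz.2, hz.1.1, hz.1.2⟩
  set k : ℕ → ℕ := fun z => ⌊(distZ (α * z) - 1 / (N : ℝ)) / η⌋₊ with hkdef
  set K : ℕ := ⌊1 / (2 * η)⌋₊ with hKdef
  have hdist_half : ∀ z : ℕ, distZ (α * z) ≤ 1 / 2 := fun z => abs_sub_round _
  have hk_le : ∀ z ∈ S, 1 / (N : ℝ) + k z * η ≤ distZ (α * z) := by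
    intro z hz
    obtain ⟨h1, -, -⟩ := hmemS z hz
    have h0 : 0 ≤ (distZ (α * z) - 1 / (N : ℝ)) / η := by
      apply div_nonneg (by linarith) hη.le
    have := Nat.floor_le h0
    rw [le_div_iff₀ hη] at this
    simp only [hkdef]
    linarith
  have hk_inj : ∀ z₁ ∈ S, ∀ z₂ ∈ S, k z₁ = k z₂ → z₁ = z₂ := by
    intro z₁ hz₁ z₂ hz₂ heq
    by_contra hne
    obtain ⟨ha1, hb1, hc1⟩ := hmemS z₁ hz₁
    obtain ⟨ha2, hb2, hc2⟩ := hmemS z₂ hz₂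
    have hs := hsep z₁ z₂ hb1 hc1 hb2 hc2 hne
    set u : ℝ := (distZ (α * z₁) - 1 / (N : ℝ)) / η with hu
    set v : ℝ := (distZ (α * z₂) - 1 / (N : ℝ)) / η with hv
    have hu0 : 0 ≤ u := div_nonneg (by linarith) hη.le
    have hv0 : 0 ≤ v := div_nonneg (by linarith) hη.le
    have h1 : (k z₁ : ℝ) ≤ u := Nat.floor_le hu0
    have h2 : u < k z₁ + 1 := Nat.lt_floor_add_one u
    have h3 : (k z₂ : ℝ) ≤ v := Nat.floor_le hv0
    have h4 : v < k z₂ + 1 := Nat.lt_floor_add_one v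
    have hkk : (k z₁ : ℝ) = (k z₂ : ℝ) := by exact_mod_cast heq
    have huv : u - v < 1 := by linarith
    have hvu : v - u < 1 := by linarith
    have hue : u * η = distZ (α * z₁) - 1 / (N : ℝ) := div_mul_cancel₀ _ (ne_of_gt hη)
    have hve : v * η = distZ (α * z₂) - 1 / (N : ℝ) := div_mul_cancel₀ _ (ne_of_gt hη)
    rcases le_abs.mp hs with h | h
    · nlinarith
    · nlinarith
  have hk_K : ∀ z ∈ S, k z ≤ K := by
    intro z hz
    obtain ⟨h1, -, -⟩ := hmemS z hz
    apply Nat.floor_mono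
    rw [show 1 / (2 * η) = (1 / 2) / η by rw [div_div]]
    gcongr
    have h2 := hdist_half z
    have h3 : (0:ℝ) ≤ 1 / (N : ℝ) := by positivity
    linarith
  -- main sum bound
  have hsum : (∑ z ∈ S, 1 / distZ (α * z))
      ≤ (N : ℝ) + (1 / η) * ((harmonic K : ℚ) : ℝ) := by
    calc (∑ z ∈ S, 1 / distZ (α * z))
        ≤ ∑ z ∈ S, 1 / (1 / (N : ℝ) + k z * η) := by
          apply Finset.sum_le_sum
          intro z hz
          apply one_div_le_one_div_of_le (by positivity) (hk_le z hz)
      _ = ∑ j ∈ S.image k, 1 / (1 / (N : ℝ) + j * η) := by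
          rw [Finset.sum_image hk_inj]
      _ ≤ ∑ j ∈ Finset.range (K + 1), 1 / (1 / (N : ℝ) + j * η) := by
          apply Finset.sum_le_sum_of_subset_of_nonneg
          · intro j hj
            rw [Finset.mem_range]
            obtain ⟨z, hz, rfl⟩ := Finset.mem_image.mp hj
            exact Nat.lt_succ_of_le (hk_K z hz)
          · intro j _ _
            positivity
      _ = (∑ j ∈ Finset.range K, 1 / (1 / (N : ℝ) + (j + 1 : ℕ) * η))
            + 1 / (1 / (N : ℝ) + (0 : ℕ) * η) := Finset.sum_range_succ' _ K
      _ ≤ (∑ j ∈ Finset.range K, 1 / ((j + 1 : ℕ) * η)) + (N : ℝ) := by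
          apply add_le_add
          · apply Finset.sum_le_sum
            intro j _
            apply one_div_le_one_div_of_le (by positivity)
            have : (0:ℝ) ≤ 1 / (N : ℝ) := by positivity
            linarith
          · simp only [Nat.cast_zero, zero_mul, add_zero, one_div_one_div]
            exact le_refl _
      _ = (N : ℝ) + (1 / η) * ((harmonic K : ℚ) : ℝ) := by
          rw [add_comm]
          congr 1
          have hcast : ((harmonic K : ℚ) : ℝ) = ∑ i ∈ Finset.range K, ((i : ℝ) + 1)⁻¹ := by
            rw [harmonic]
            push_cast
            rfl
          rw [hcast, Finset.mul_sum]
          apply Finset.sum_congr rfl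
          intro j _
          push_cast
          rw [one_div, mul_inv, one_div]
          ring
  -- numeric endgame
  have hK1 : 1 ≤ K := by
    apply Nat.le_floor
    rw [Nat.cast_one, le_div_iff₀ (by linarith)]
    linarith
  have hKle : (K : ℝ) ≤ 1 / η := by
    have h1 : (K : ℝ) ≤ 1 / (2 * η) := Nat.floor_le (by positivity)
    have : 1 / (2 * η) ≤ 1 / η := by
      apply one_div_le_one_div_of_le hη
      linarith
    linarith
  have hinvη : 1 / η = A * x ^ ((1 : ℝ) + δ) := by
    rw [hηdef, hAdef]
    rw [Real.rpow_neg (by linarith), Real.mul_rpow (by norm_num) hx0.le]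
    field_simp
  have hharm : ((harmonic K : ℚ) : ℝ) ≤ 1 + Real.log (1 / η) := by
    have h1 : ((harmonic K : ℚ) : ℝ) ≤ 1 + Real.log K := harmonic_le_one_add_log K
    have h2 : Real.log (K : ℝ) ≤ Real.log (1 / η) := by
      apply Real.log_le_log (by exact_mod_cast hK1) hKle
    linarith
  have hlog1η : Real.log (1 / η) = Real.log A + (1 + δ) * Real.log x := by
    rw [hinvη, Real.log_mul (ne_of_gt hA0) (by positivity), Real.log_rpow hx0]
  have hL0 : 0 ≤ Real.log x := Real.log_nonneg hx1
  have hLQ : Real.log x ≤ x ^ δ / δ := by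
    have h1 : Real.log (x ^ δ) = δ * Real.log x := Real.log_rpow hx0 δ
    have h2 : Real.log (x ^ δ) ≤ x ^ δ - 1 := Real.log_le_sub_one_of_pos (by positivity)
    have h3 : 0 < x ^ δ := by positivity
    rw [h1] at h2
    rw [le_div_iff₀ hδ]
    nlinarith
  have hPQ : x ^ ((1 : ℝ) + δ) * x ^ δ = x ^ ((1 : ℝ) + ε) := by
    rw [← Real.rpow_add hx0]
    congr 1
    rw [hδdef]; ring
  have hPR : x ^ ((1 : ℝ) + δ) ≤ x ^ ((1 : ℝ) + ε) := by
    apply Real.rpow_le_rpow_of_exponent_le hx1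
    rw [hδdef]; linarith
  have hNR : (N : ℝ) ≤ x ^ ((1 : ℝ) + ε) := by
    have h1 : (N : ℝ) ≤ x := by
      rw [hxdef]; nlinarith [hM0, hN0, (by exact_mod_cast hM : (1:ℝ) ≤ (M:ℝ))]
    have h2 : x ≤ x ^ ((1 : ℝ) + ε) := by
      calc x = x ^ (1 : ℝ) := (Real.rpow_one x).symm
        _ ≤ x ^ ((1 : ℝ) + ε) := Real.rpow_le_rpow_of_exponent_le hx1 (by linarith)
    linarith
  have hP0 : 0 < x ^ ((1 : ℝ) + δ) := by positivity
  have hlogA : Real.log A ≤ |Real.log A| := le_abs_self _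
  have habs0 : 0 ≤ |Real.log A| := abs_nonneg _
  calc (∑ z ∈ S, 1 / distZ (α * z))
      ≤ (N : ℝ) + (1 / η) * ((harmonic K : ℚ) : ℝ) := hsum
    _ ≤ (N : ℝ) + (A * x ^ ((1 : ℝ) + δ)) * (1 + Real.log A + (1 + δ) * Real.log x) := by
        rw [← hinvη]
        apply add_le_add_right
        apply mul_le_mul_of_nonneg_left _ (by positivity)
        have h := hharm
        rw [hlog1η] at h
        linarith
    _ ≤ C * x ^ ((1 : ℝ) + ε) := by
        rw [hCdef]
        have hA1 : A * x ^ ((1:ℝ) + δ) * (1 + Real.log A)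
            ≤ A * (1 + |Real.log A|) * x ^ ((1:ℝ) + ε) := by
          have e1 : A * x ^ ((1:ℝ) + δ) * (1 + Real.log A)
              ≤ A * x ^ ((1:ℝ) + δ) * (1 + |Real.log A|) :=
            mul_le_mul_of_nonneg_left (by linarith) (by positivity)
          have e2 : A * x ^ ((1:ℝ) + δ) * (1 + |Real.log A|)
              ≤ A * x ^ ((1:ℝ) + ε) * (1 + |Real.log A|) := by
            apply mul_le_mul_of_nonneg_right _ (by positivity)
            exact mul_le_mul_of_nonneg_left hPR hA0.le
          nlinarith
        have hA2 : A * x ^ ((1:ℝ) + δ) * ((1 + δ) * Real.log x)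
            ≤ A * (1 + δ) / δ * x ^ ((1:ℝ) + ε) := by
          have e1 : A * x ^ ((1:ℝ) + δ) * ((1 + δ) * Real.log x)
              ≤ A * x ^ ((1:ℝ) + δ) * ((1 + δ) * (x ^ δ / δ)) := by
            apply mul_le_mul_of_nonneg_left _ (by positivity)
            exact mul_le_mul_of_nonneg_left hLQ (by positivity)
          have e2 : A * x ^ ((1:ℝ) + δ) * ((1 + δ) * (x ^ δ / δ))
              = A * (1 + δ) / δ * (x ^ ((1:ℝ) + δ) * x ^ δ) := by ring
          rw [e2, hPQ] at e1
          exact e1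
        nlinarith [hA1, hA2, hNR, hP0]
end

section
/- For any 𝔷 = 𝔞 + i𝔟 in the upper half-plane and any ξ ∈ ℝ², Σ_{(x,y)∈ℤ², |x|≠|y|} exp(Ω_{𝔷,ξ}(x,y)) = Σ_{(x,y)∈ℤ², xy≠0} Ψ_{𝔷,ξ}(x,y) + Σ_{(x,y)∈ℤ²} Ψ_{𝔷,ξ}(x − 1/2, y + 1/2), where Ω_{𝔷,ξ}(x,y) = πi(𝔞(x²−y²) + i𝔟(x²+y²)) + 2πi⟨ξ,(x,y)⟩ and Ψ_{𝔷,ξ}(x,y) = exp(Ω_{𝔷,ξ}(x+y, x−y)). -/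
open Complex

/-- `Ω_{𝔷,ξ}(x,y) = πi(𝔞(x²−y²) + i𝔟(x²+y²)) + 2πi⟨ξ,(x,y)⟩`. -/
noncomputable def Omega (a b : ℝ) (ξ : ℝ × ℝ) (x y : ℝ) : ℂ :=
  Real.pi * Complex.I * ((a : ℂ) * ((x : ℂ) ^ 2 - (y : ℂ) ^ 2)
      + Complex.I * (b : ℂ) * ((x : ℂ) ^ 2 + (y : ℂ) ^ 2))
    + 2 * Real.pi * Complex.I * ((ξ.1 : ℂ) * (x : ℂ) + (ξ.2 : ℂ) * (y : ℂ))

/-- `Ψ_{𝔷,ξ}(x,y) = exp(Ω_{𝔷,ξ}(x+y, x−y))`. -/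
noncomputable def Psi (a b : ℝ) (ξ : ℝ × ℝ) (x y : ℝ) : ℂ :=
  Complex.exp (Omega a b ξ (x + y) (x - y))

lemma summable_master (a : ℝ) {b : ℝ} (hb : 0 < b) (ξ : ℝ × ℝ) :
    Summable (fun q : ℤ × ℤ => Complex.exp (Omega a b ξ (q.1 : ℝ) (q.2 : ℝ))) := by
  have key : ∀ q : ℤ × ℤ, Complex.exp (Omega a b ξ (q.1 : ℝ) (q.2 : ℝ))
      = jacobiTheta₂_term q.1 (ξ.1 : ℂ) ((a : ℂ) + (b : ℂ) * Complex.I)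
        * jacobiTheta₂_term q.2 (ξ.2 : ℂ) (-(a : ℂ) + (b : ℂ) * Complex.I) := by
    intro q
    rw [jacobiTheta₂_term, jacobiTheta₂_term, ← Complex.exp_add]
    congr 1
    rw [Omega]
    push_cast
    ring
  have him1 : (0 : ℝ) < ((a : ℂ) + (b : ℂ) * Complex.I).im := by simp [hb]
  have him2 : (0 : ℝ) < (-(a : ℂ) + (b : ℂ) * Complex.I).im := by simp [hb]
  have h1 : Summable (fun n : ℤ =>
      ‖jacobiTheta₂_term n (ξ.1 : ℂ) ((a : ℂ) + (b : ℂ) * Complex.I)‖) :=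
    summable_norm_iff.mpr ((summable_jacobiTheta₂_term_iff _ _).mpr him1)
  have h2 : Summable (fun n : ℤ =>
      ‖jacobiTheta₂_term n (ξ.2 : ℂ) (-(a : ℂ) + (b : ℂ) * Complex.I)‖) :=
    summable_norm_iff.mpr ((summable_jacobiTheta₂_term_iff _ _).mpr him2)
  have := summable_mul_of_summable_norm h1 h2
  exact this.congr fun q => (key q).symm

/-- the set of pairs with distinct absolute values and even coordinate sum -/
def evenSet : Set (ℤ × ℤ) := {q | |q.1| ≠ |q.2| ∧ Even (q.1 + q.2)}

/-- the set of pairs with distinct absolute values and odd coordinate sum -/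
def oddSet : Set (ℤ × ℤ) := {q | |q.1| ≠ |q.2| ∧ ¬ Even (q.1 + q.2)}

def equivEven : {p : ℤ × ℤ // p.1 * p.2 ≠ 0} ≃ evenSet where
  toFun p := ⟨(p.1.1 + p.1.2, p.1.1 - p.1.2), by
    have hp := p.2
    rw [mul_ne_zero_iff] at hp
    constructor
    · simp only [Int.abs_eq_natAbs]
      omega
    · exact ⟨p.1.1, by ring⟩⟩
  invFun q := ⟨((q.1.1 + q.1.2) / 2, (q.1.1 - q.1.2) / 2), by
    obtain ⟨h1, h2⟩ := q.2
    rw [mul_ne_zero_iff]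
    rw [Int.even_iff] at h2
    simp only [Int.abs_eq_natAbs] at h1
    omega⟩
  left_inv p := by
    apply Subtype.ext
    ext <;> simp <;> omega
  right_inv q := by
    apply Subtype.ext
    obtain ⟨h1, h2⟩ := q.2
    rw [Int.even_iff] at h2
    ext <;> simp <;> omega

def equivOdd : (ℤ × ℤ) ≃ oddSet where
  toFun p := ⟨(p.1 + p.2, p.1 - p.2 - 1), by
    constructor
    · simp only [Int.abs_eq_natAbs]
      omega
    · rw [Int.even_iff]
      omega⟩
  invFun q := ((q.1.1 + q.1.2 + 1) / 2, (q.1.1 - q.1.2 - 1) / 2)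
  left_inv p := by ext <;> simp <;> omega
  right_inv q := by
    apply Subtype.ext
    obtain ⟨h1, h2⟩ := q.2
    rw [Int.even_iff] at h2
    ext <;> simp <;> omega

theorem stmt_8 (a b : ℝ) (hb : 0 < b) (ξ : ℝ × ℝ) :
    (∑' p : {p : ℤ × ℤ // |p.1| ≠ |p.2|}, Complex.exp (Omega a b ξ (p.1.1 : ℝ) (p.1.2 : ℝ)))
      = (∑' p : {p : ℤ × ℤ // p.1 * p.2 ≠ 0}, Psi a b ξ (p.1.1 : ℝ) (p.1.2 : ℝ))
        + ∑' p : ℤ × ℤ, Psi a b ξ ((p.1 : ℝ) - 1 / 2) ((p.2 : ℝ) + 1 / 2) := by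
  classical
  set F : ℤ × ℤ → ℂ := fun q => Complex.exp (Omega a b ξ (q.1 : ℝ) (q.2 : ℝ)) with hF
  have hsum : Summable F := summable_master a hb ξ
  have hdisj : Disjoint evenSet oddSet := by
    rw [Set.disjoint_left]
    rintro q ⟨_, h⟩ ⟨_, h'⟩
    exact h' h
  have hunion : evenSet ∪ oddSet = {q : ℤ × ℤ | |q.1| ≠ |q.2|} := by
    ext q
    simp only [evenSet, oddSet, Set.mem_union, Set.mem_setOf_eq]
    tauto
  have hsplit : (∑' p : {p : ℤ × ℤ // |p.1| ≠ |p.2|}, F p)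
      = (∑' p : evenSet, F p) + ∑' p : oddSet, F p := by
    have h := Summable.tsum_union_disjoint (f := F) hdisj (hsum.subtype evenSet) (hsum.subtype oddSet)
    rw [hunion] at h
    exact h
  have h₀ : (∑' p : {p : ℤ × ℤ // p.1 * p.2 ≠ 0}, Psi a b ξ (p.1.1 : ℝ) (p.1.2 : ℝ))
      = ∑' p : evenSet, F p := by
    rw [← Equiv.tsum_eq equivEven (fun q : evenSet => F q)]
    refine tsum_congr fun p => ?_
    show Psi a b ξ (p.1.1 : ℝ) (p.1.2 : ℝ) = F (equivEven p : ℤ × ℤ)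
    simp only [Psi, hF, equivEven, Equiv.coe_fn_mk]
    congr 1
    rw [Omega, Omega]
    push_cast
    ring
  have h₁ : (∑' p : ℤ × ℤ, Psi a b ξ ((p.1 : ℝ) - 1 / 2) ((p.2 : ℝ) + 1 / 2))
      = ∑' p : oddSet, F p := by
    rw [← Equiv.tsum_eq equivOdd (fun q : oddSet => F q)]
    refine tsum_congr fun p => ?_
    show Psi a b ξ ((p.1 : ℝ) - 1 / 2) ((p.2 : ℝ) + 1 / 2) = F (equivOdd p : ℤ × ℤ)
    simp only [Psi, hF, equivOdd, Equiv.coe_fn_mk]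
    congr 1
    rw [Omega, Omega]
    push_cast
    ring
  calc (∑' p : {p : ℤ × ℤ // |p.1| ≠ |p.2|}, F p)
      = (∑' p : evenSet, F p) + ∑' p : oddSet, F p := hsplit
    _ = _ := by rw [h₀, h₁]
end

section
/- For any 𝔷 = 𝔞+i𝔟 in the upper half-plane and ξ ∈ ℝ², Σ_{(x,y)∈ℤ², |x|≠|y|} e^{Ω_{𝔷,ξ}(x,y)} = Ψ_{𝔷,ξ}(0,0) + (2Σ_{(x,y)∈ℤ²} Ψ_{𝔷,ξ}(x,y) − Σ_{y∈ℤ} Ψ_{𝔷,ξ}(0,y) − Σ_{x∈ℤ} Ψ_{𝔷,ξ}(x,0)) + Σ_{(x,y)∈ℤ²} (Ψ_{𝔷,ξ}(x/2, y/2) − Ψ_{𝔷,ξ}(x, y/2) − Ψ_{𝔷,ξ}(x/2, y)), where moreover Ψ_{𝔷,ξ}(0,0) = 1. -/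
open Complex

lemma Omega_congr (a b : ℝ) (ξ : ℝ × ℝ) {x y x' y' : ℝ} (h1 : x = x') (h2 : y = y') :
    Omega a b ξ x y = Omega a b ξ x' y' := by rw [h1, h2]

/-- `G(m,n) = exp(Ω(m/2, n/2))`, the half-lattice values. -/
noncomputable def stmt9G (a b : ℝ) (ξ : ℝ × ℝ) (p : ℤ × ℤ) : ℂ :=
  Complex.exp (Omega a b ξ ((p.1 : ℝ) / 2) ((p.2 : ℝ) / 2))

lemma stmt9_norm (a b : ℝ) (ξ : ℝ × ℝ) (x y : ℝ) :
    ‖Complex.exp (Omega a b ξ x y)‖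
      = Real.exp (-(Real.pi * b) * x ^ 2) * Real.exp (-(Real.pi * b) * y ^ 2) := by
  rw [Complex.norm_exp, ← Real.exp_add]
  congr 1
  simp [Omega, ← Complex.ofReal_pow]
  ring

lemma stmt9_summable {b : ℝ} (hb : 0 < b) (a : ℝ) (ξ : ℝ × ℝ) :
    Summable (stmt9G a b ξ) := by
  rw [← summable_norm_iff]
  have h1 : Summable (fun n : ℤ => Real.exp (-(Real.pi * b) * ((n : ℝ) / 2) ^ 2)) := by
    have := summable_pow_mul_jacobiTheta₂_term_bound 0 (show 0 < b / 4 by positivity) 0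
    refine this.congr fun n => ?_
    rw [pow_zero, one_mul]
    congr 1
    ring
  have h2 := h1.mul_of_nonneg h1 (fun n => (Real.exp_pos _).le) (fun n => (Real.exp_pos _).le)
  refine h2.congr fun p => ?_
  rw [show stmt9G a b ξ p = Complex.exp (Omega a b ξ ((p.1 : ℝ) / 2) ((p.2 : ℝ) / 2)) from rfl,
    stmt9_norm]

lemma stmt9_reindex {α : Type*} (φ : α → ℤ × ℤ) (hφ : Function.Injective φ) (f : ℤ × ℤ → ℂ) :
    ∑' x, f (φ x) = ∑' p, (Set.range φ).indicator f p := by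
  have h1 : ∀ x, f (φ x) = (Set.range φ).indicator f (φ x) := fun x =>
    (Set.indicator_of_mem (Set.mem_range_self x) f).symm
  rw [tsum_congr h1]
  exact hφ.tsum_eq (Set.support_indicator_subset)


set_option maxHeartbeats 1000000 in
lemma stmt9_coef (f : ℤ × ℤ → ℂ) (p : ℤ × ℤ) :
    ({p : ℤ × ℤ | 2 ∣ p.1 ∧ 2 ∣ p.2 ∧ p.1 ≠ p.2 ∧ p.1 ≠ -p.2}).indicator f p
      = ({((0 : ℤ), (0 : ℤ))} : Set (ℤ × ℤ)).indicator f p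
        + (2 * ({p : ℤ × ℤ | 4 ∣ p.1 + p.2 ∧ 4 ∣ p.1 - p.2}).indicator f p
            - ({p : ℤ × ℤ | p.2 = -p.1 ∧ 2 ∣ p.1}).indicator f p
            - ({p : ℤ × ℤ | p.2 = p.1 ∧ 2 ∣ p.1}).indicator f p)
        + (({p : ℤ × ℤ | 2 ∣ p.1 + p.2}).indicator f p
            - ({p : ℤ × ℤ | 4 ∣ p.1 + p.2}).indicator f p
            - ({p : ℤ × ℤ | 4 ∣ p.1 - p.2}).indicator f p) := by
  obtain ⟨m, n⟩ := p
  set z := f (m, n) with hz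
  simp only [Set.indicator_apply, Set.mem_setOf_eq, Set.mem_singleton_iff, Prod.mk.injEq]
  split_ifs <;> first | (exfalso; omega) | ring1

theorem stmt_9 (a b : ℝ) (hb : 0 < b) (ξ : ℝ × ℝ) :
    (∑' p : {p : ℤ × ℤ // |p.1| ≠ |p.2|}, Complex.exp (Omega a b ξ (p.1.1 : ℝ) (p.1.2 : ℝ)))
      = Psi a b ξ 0 0
        + ((2 * ∑' p : ℤ × ℤ, Psi a b ξ (p.1 : ℝ) (p.2 : ℝ))
            - (∑' y : ℤ, Psi a b ξ 0 (y : ℝ)) - ∑' x : ℤ, Psi a b ξ (x : ℝ) 0)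
        + ∑' p : ℤ × ℤ,
            (Psi a b ξ ((p.1 : ℝ) / 2) ((p.2 : ℝ) / 2)
              - Psi a b ξ (p.1 : ℝ) ((p.2 : ℝ) / 2)
              - Psi a b ξ ((p.1 : ℝ) / 2) (p.2 : ℝ)) ∧
    Psi a b ξ 0 0 = 1 := by
  have hPsi00 : Psi a b ξ 0 0 = 1 := by
    simp [Psi, Omega]
  refine ⟨?_, hPsi00⟩
  set G : ℤ × ℤ → ℂ := stmt9G a b ξ with hG
  have hsum : Summable G := stmt9_summable hb a ξ
  -- the seven sets
  set S0 : Set (ℤ × ℤ) := {((0 : ℤ), (0 : ℤ))} with hS0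
  set SL : Set (ℤ × ℤ) := {p | 2 ∣ p.1 ∧ 2 ∣ p.2 ∧ p.1 ≠ p.2 ∧ p.1 ≠ -p.2} with hSL
  set S1 : Set (ℤ × ℤ) := {p | 4 ∣ p.1 + p.2 ∧ 4 ∣ p.1 - p.2} with hS1
  set S2 : Set (ℤ × ℤ) := {p | p.2 = -p.1 ∧ 2 ∣ p.1} with hS2
  set S3 : Set (ℤ × ℤ) := {p | p.2 = p.1 ∧ 2 ∣ p.1} with hS3
  set S4 : Set (ℤ × ℤ) := {p | 2 ∣ p.1 + p.2} with hS4
  set S5 : Set (ℤ × ℤ) := {p | 4 ∣ p.1 + p.2} with hS5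
  set S6 : Set (ℤ × ℤ) := {p | 4 ∣ p.1 - p.2} with hS6
  -- step 1 : LHS as indicator sum
  have hL : (∑' p : {p : ℤ × ℤ // |p.1| ≠ |p.2|},
        Complex.exp (Omega a b ξ (p.1.1 : ℝ) (p.1.2 : ℝ)))
      = ∑' p, SL.indicator G p := by
    have e1 : (∑' p : {p : ℤ × ℤ // |p.1| ≠ |p.2|},
          Complex.exp (Omega a b ξ (p.1.1 : ℝ) (p.1.2 : ℝ)))
        = ∑' p, ({p : ℤ × ℤ | |p.1| ≠ |p.2|}).indicator
            (fun p => Complex.exp (Omega a b ξ (p.1 : ℝ) (p.2 : ℝ))) p :=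
      tsum_subtype {p : ℤ × ℤ | |p.1| ≠ |p.2|}
        (fun p => Complex.exp (Omega a b ξ (p.1 : ℝ) (p.2 : ℝ)))
    have hd : Function.Injective (fun p : ℤ × ℤ => ((2 * p.1, 2 * p.2) : ℤ × ℤ)) := by
      intro p q h
      simp only [Prod.mk.injEq] at h
      exact Prod.ext (by omega) (by omega)
    have e2 : ∀ p : ℤ × ℤ, SL.indicator G (2 * p.1, 2 * p.2)
        = ({p : ℤ × ℤ | |p.1| ≠ |p.2|}).indicator
            (fun p => Complex.exp (Omega a b ξ (p.1 : ℝ) (p.2 : ℝ))) p := by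
      intro p
      have hmem : ((2 * p.1, 2 * p.2) ∈ SL) ↔ (p ∈ {p : ℤ × ℤ | |p.1| ≠ |p.2|}) := by
        simp only [hSL, Set.mem_setOf_eq, ne_eq, abs_eq_abs]
        omega
      have hval : G (2 * p.1, 2 * p.2) = Complex.exp (Omega a b ξ (p.1 : ℝ) (p.2 : ℝ)) := by
        refine congrArg Complex.exp (Omega_congr a b ξ ?_ ?_) <;> push_cast <;> ring
      simp only [Set.indicator_apply]
      exact if_congr hmem hval rfl
    have e3 : ∑' p, SL.indicator G p
        = ∑' p : ℤ × ℤ, SL.indicator G (2 * p.1, 2 * p.2) := by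
      refine (hd.tsum_eq ?_).symm
      intro q hq
      have hq' : q ∈ SL := Set.support_indicator_subset hq
      simp only [hSL, Set.mem_setOf_eq] at hq'
      exact ⟨(q.1 / 2, q.2 / 2), Prod.ext (by simp; omega) (by simp; omega)⟩
    rw [e1, e3, tsum_congr e2]
  -- step 2 : each Psi sum as indicator sum
  have h1 : (∑' p : ℤ × ℤ, Psi a b ξ (p.1 : ℝ) (p.2 : ℝ)) = ∑' p, S1.indicator G p := by
    have hφ : Function.Injective
        (fun p : ℤ × ℤ => ((2 * (p.1 + p.2), 2 * (p.1 - p.2)) : ℤ × ℤ)) := by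
      intro p q h
      simp only [Prod.mk.injEq] at h
      exact Prod.ext (by omega) (by omega)
    have hr : Set.range (fun p : ℤ × ℤ => ((2 * (p.1 + p.2), 2 * (p.1 - p.2)) : ℤ × ℤ)) = S1 := by
      ext ⟨m, n⟩
      simp only [Set.mem_range, Prod.mk.injEq, Prod.exists, hS1, Set.mem_setOf_eq]
      constructor
      · rintro ⟨u, v, h1, h2⟩; omega
      · rintro ⟨h1, h2⟩; exact ⟨(m + n) / 4, (m - n) / 4, by omega, by omega⟩
    have hv : ∀ p : ℤ × ℤ, Psi a b ξ (p.1 : ℝ) (p.2 : ℝ)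
        = G (2 * (p.1 + p.2), 2 * (p.1 - p.2)) := by
      intro p
      refine congrArg Complex.exp (Omega_congr a b ξ ?_ ?_) <;> push_cast <;> ring
    rw [tsum_congr hv, stmt9_reindex _ hφ G, hr]
  have h2 : (∑' y : ℤ, Psi a b ξ 0 (y : ℝ)) = ∑' p, S2.indicator G p := by
    have hφ : Function.Injective (fun y : ℤ => ((2 * y, -(2 * y)) : ℤ × ℤ)) := by
      intro p q h
      simp only [Prod.mk.injEq] at h
      omega
    have hr : Set.range (fun y : ℤ => ((2 * y, -(2 * y)) : ℤ × ℤ)) = S2 := by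
      ext ⟨m, n⟩
      simp only [Set.mem_range, Prod.mk.injEq, hS2, Set.mem_setOf_eq]
      constructor
      · rintro ⟨u, h1, h2⟩; omega
      · rintro ⟨h1, h2⟩; exact ⟨m / 2, by omega, by omega⟩
    have hv : ∀ y : ℤ, Psi a b ξ 0 (y : ℝ) = G (2 * y, -(2 * y)) := by
      intro y
      refine congrArg Complex.exp (Omega_congr a b ξ ?_ ?_) <;> push_cast <;> ring
    rw [tsum_congr hv, stmt9_reindex _ hφ G, hr]
  have h3 : (∑' x : ℤ, Psi a b ξ (x : ℝ) 0) = ∑' p, S3.indicator G p := by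
    have hφ : Function.Injective (fun x : ℤ => ((2 * x, 2 * x) : ℤ × ℤ)) := by
      intro p q h
      simp only [Prod.mk.injEq] at h
      omega
    have hr : Set.range (fun x : ℤ => ((2 * x, 2 * x) : ℤ × ℤ)) = S3 := by
      ext ⟨m, n⟩
      simp only [Set.mem_range, Prod.mk.injEq, hS3, Set.mem_setOf_eq]
      constructor
      · rintro ⟨u, h1, h2⟩; omega
      · rintro ⟨h1, h2⟩; exact ⟨m / 2, by omega, by omega⟩
    have hv : ∀ x : ℤ, Psi a b ξ (x : ℝ) 0 = G (2 * x, 2 * x) := by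
      intro x
      refine congrArg Complex.exp (Omega_congr a b ξ ?_ ?_) <;> push_cast <;> ring
    rw [tsum_congr hv, stmt9_reindex _ hφ G, hr]
  -- the three half-lattice maps
  have hφ4 : Function.Injective (fun p : ℤ × ℤ => ((p.1 + p.2, p.1 - p.2) : ℤ × ℤ)) := by
    intro p q h
    simp only [Prod.mk.injEq] at h
    exact Prod.ext (by omega) (by omega)
  have hφ5 : Function.Injective (fun p : ℤ × ℤ => ((2 * p.1 + p.2, 2 * p.1 - p.2) : ℤ × ℤ)) := by
    intro p q h
    simp only [Prod.mk.injEq] at h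
    exact Prod.ext (by omega) (by omega)
  have hφ6 : Function.Injective (fun p : ℤ × ℤ => ((p.1 + 2 * p.2, p.1 - 2 * p.2) : ℤ × ℤ)) := by
    intro p q h
    simp only [Prod.mk.injEq] at h
    exact Prod.ext (by omega) (by omega)
  have hv4 : ∀ p : ℤ × ℤ, Psi a b ξ ((p.1 : ℝ) / 2) ((p.2 : ℝ) / 2)
      = G (p.1 + p.2, p.1 - p.2) := by
    intro p
    refine congrArg Complex.exp (Omega_congr a b ξ ?_ ?_) <;> push_cast <;> ring
  have hv5 : ∀ p : ℤ × ℤ, Psi a b ξ (p.1 : ℝ) ((p.2 : ℝ) / 2)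
      = G (2 * p.1 + p.2, 2 * p.1 - p.2) := by
    intro p
    refine congrArg Complex.exp (Omega_congr a b ξ ?_ ?_) <;> push_cast <;> ring
  have hv6 : ∀ p : ℤ × ℤ, Psi a b ξ ((p.1 : ℝ) / 2) (p.2 : ℝ)
      = G (p.1 + 2 * p.2, p.1 - 2 * p.2) := by
    intro p
    refine congrArg Complex.exp (Omega_congr a b ξ ?_ ?_) <;> push_cast <;> ring
  have hr4 : Set.range (fun p : ℤ × ℤ => ((p.1 + p.2, p.1 - p.2) : ℤ × ℤ)) = S4 := by
    ext ⟨m, n⟩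
    simp only [Set.mem_range, Prod.mk.injEq, Prod.exists, hS4, Set.mem_setOf_eq]
    constructor
    · rintro ⟨u, v, h1, h2⟩; omega
    · intro h1; exact ⟨(m + n) / 2, (m - n) / 2, by omega, by omega⟩
  have hr5 : Set.range (fun p : ℤ × ℤ => ((2 * p.1 + p.2, 2 * p.1 - p.2) : ℤ × ℤ)) = S5 := by
    ext ⟨m, n⟩
    simp only [Set.mem_range, Prod.mk.injEq, Prod.exists, hS5, Set.mem_setOf_eq]
    constructor
    · rintro ⟨u, v, h1, h2⟩; omega
    · intro h1; exact ⟨(m + n) / 4, (m - n) / 2, by omega, by omega⟩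
  have hr6 : Set.range (fun p : ℤ × ℤ => ((p.1 + 2 * p.2, p.1 - 2 * p.2) : ℤ × ℤ)) = S6 := by
    ext ⟨m, n⟩
    simp only [Set.mem_range, Prod.mk.injEq, Prod.exists, hS6, Set.mem_setOf_eq]
    constructor
    · rintro ⟨u, v, h1, h2⟩; omega
    · intro h1; exact ⟨(m + n) / 2, (m - n) / 4, by omega, by omega⟩
  have hsum4 : Summable (fun p : ℤ × ℤ => G (p.1 + p.2, p.1 - p.2)) :=
    hsum.comp_injective hφ4
  have hsum5 : Summable (fun p : ℤ × ℤ => G (2 * p.1 + p.2, 2 * p.1 - p.2)) :=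
    hsum.comp_injective hφ5
  have hsum6 : Summable (fun p : ℤ × ℤ => G (p.1 + 2 * p.2, p.1 - 2 * p.2)) :=
    hsum.comp_injective hφ6
  have h456 : (∑' p : ℤ × ℤ,
        (Psi a b ξ ((p.1 : ℝ) / 2) ((p.2 : ℝ) / 2)
          - Psi a b ξ (p.1 : ℝ) ((p.2 : ℝ) / 2)
          - Psi a b ξ ((p.1 : ℝ) / 2) (p.2 : ℝ)))
      = (∑' p, S4.indicator G p) - (∑' p, S5.indicator G p) - ∑' p, S6.indicator G p := by
    have e0 : ∀ p : ℤ × ℤ,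
        (Psi a b ξ ((p.1 : ℝ) / 2) ((p.2 : ℝ) / 2)
          - Psi a b ξ (p.1 : ℝ) ((p.2 : ℝ) / 2)
          - Psi a b ξ ((p.1 : ℝ) / 2) (p.2 : ℝ))
        = G (p.1 + p.2, p.1 - p.2) - G (2 * p.1 + p.2, 2 * p.1 - p.2)
            - G (p.1 + 2 * p.2, p.1 - 2 * p.2) := by
      intro p
      rw [hv4, hv5, hv6]
    rw [tsum_congr e0, Summable.tsum_sub (hsum4.sub hsum5) hsum6, Summable.tsum_sub hsum4 hsum5,
      stmt9_reindex _ hφ4 G, hr4, stmt9_reindex _ hφ5 G, hr5, stmt9_reindex _ hφ6 G, hr6]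
  -- step 3 : Psi 0 0 as indicator sum
  have h0 : Psi a b ξ 0 0 = ∑' p, S0.indicator G p := by
    rw [tsum_eq_single ((0 : ℤ), (0 : ℤ))]
    · rw [hPsi00, Set.indicator_of_mem (by simp [hS0]) G]
      simp [hG, stmt9G, Omega]
    · intro q hq
      exact Set.indicator_of_notMem (by simpa [hS0] using hq) G
  -- step 4 : pointwise identity
  have key : ∀ p : ℤ × ℤ, SL.indicator G p
      = S0.indicator G p
        + (2 * S1.indicator G p - S2.indicator G p - S3.indicator G p)
        + (S4.indicator G p - S5.indicator G p - S6.indicator G p) := by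
    intro p
    simp only [hSL, hS0, hS1, hS2, hS3, hS4, hS5, hS6]
    exact stmt9_coef G p
  -- step 5 : assemble
  rw [hL, h1, h2, h3, h456, h0, tsum_congr key]
  have i0 := hsum.indicator S0
  have i1 := hsum.indicator S1
  have i2 := hsum.indicator S2
  have i3 := hsum.indicator S3
  have i4 := hsum.indicator S4
  have i5 := hsum.indicator S5
  have i6 := hsum.indicator S6
  rw [Summable.tsum_add (i0.add (((i1.mul_left 2).sub i2).sub i3)) ((i4.sub i5).sub i6),
    Summable.tsum_add i0 (((i1.mul_left 2).sub i2).sub i3),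
    Summable.tsum_sub ((i1.mul_left 2).sub i2) i3, Summable.tsum_sub (i1.mul_left 2) i2,
    Summable.tsum_sub (i4.sub i5) i6, Summable.tsum_sub i4 i5, tsum_mul_left]
end
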